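/- Let c > 0. There exists a constant C > 0, depending only on c, with the following property. Let s₀ ≤ s₁, let G : [s₀, s₁] → ℝ be continuously differentiable with sup |G| ≤ 1/3, let k : [s₀, s₁] → ℝ be integrable, and let z : [s₀, s₁] → ℝ be continuously differentiable with z′ locally absolutely continuous, satisfying z″(λ) + ( c² / (1 + G(λ)) ) z(λ) = k(λ) for almost every λ ∈ [s₀, s₁], with z(s₀) = z₀ and z′(s₀) = z₁. Then, setting K(s) = ∫_{s₀}^{s} |k(τ)| dτ, for every s ∈ [s₀, s₁]: |z(s)| + |z′(s)| ≤ C ( |z₀| + |z₁| + K(s) ) + C ∫_{s₀}^{s} ( |z₀| + |z₁| + K(τ) ) |G′(τ)| exp( C ∫_{τ}^{s} |G′(λ)| dλ ) dτ. -/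

import Mathlib

noncomputable section
open MeasureTheory

lemma fubini_parts_set {a b : ℝ} {f h : ℝ → ℝ}
    (hf : IntegrableOn f (Set.Ioc a b)) (hh : IntegrableOn h (Set.Ioc a b)) :
    (∫ x in Set.Ioc a b, f x) * (∫ x in Set.Ioc a b, h x)
      = (∫ τ in Set.Ioc a b, f τ * ∫ σ in Set.Ioc a τ, h σ)
        + (∫ σ in Set.Ioc a b, h σ * ∫ τ in Set.Ioc a σ, f τ) := by
  set μ := volume.restrict (Set.Ioc a b) with hμ
  have hΦ : Integrable (fun p : ℝ × ℝ => f p.1 * h p.2) (μ.prod μ) :=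
    Integrable.mul_prod hf hh
  have hT : MeasurableSet {p : ℝ × ℝ | p.2 ≤ p.1} :=
    measurableSet_le measurable_snd measurable_fst
  have hsplit := integral_add_compl hT hΦ
  rw [integral_prod_mul] at hsplit
  have h1 : (∫ p in {p : ℝ × ℝ | p.2 ≤ p.1}, f p.1 * h p.2 ∂(μ.prod μ))
      = ∫ τ in Set.Ioc a b, f τ * ∫ σ in Set.Ioc a τ, h σ := by
    rw [← integral_indicator hT, integral_prod _ (hΦ.indicator hT)]
    rw [hμ]
    apply setIntegral_congr_fun measurableSet_Ioc
    intro x hx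
    have e1 : (fun y => ({p : ℝ × ℝ | p.2 ≤ p.1}).indicator
        (fun p => f p.1 * h p.2) (x, y))
        = (Set.Iic x).indicator (fun y => f x * h y) := by
      funext y; by_cases hy : y ≤ x <;>
        simp [Set.indicator, hy, Set.mem_setOf_eq]
    dsimp only
    rw [show (∫ y in Set.Ioc a b, ({p : ℝ × ℝ | p.2 ≤ p.1}).indicator
        (fun p => f p.1 * h p.2) (x, y)) = ∫ y in Set.Ioc a b,
        (Set.Iic x).indicator (fun y => f x * h y) y from
      integral_congr_ae (.of_forall fun y => congrFun e1 y)]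
    rw [integral_indicator measurableSet_Iic,
      Measure.restrict_restrict measurableSet_Iic]
    have e2 : Set.Iic x ∩ Set.Ioc a b = Set.Ioc a x := by
      rw [Set.inter_comm, Set.Ioc_inter_Iic, min_eq_right hx.2]
    rw [e2, MeasureTheory.integral_const_mul]
  have h2 : (∫ p in {p : ℝ × ℝ | p.2 ≤ p.1}ᶜ, f p.1 * h p.2 ∂(μ.prod μ))
      = ∫ σ in Set.Ioc a b, h σ * ∫ τ in Set.Ioc a σ, f τ := by
    have hTc : MeasurableSet {p : ℝ × ℝ | p.2 ≤ p.1}ᶜ := hT.compl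
    rw [← integral_indicator hTc, integral_prod_symm _ (hΦ.indicator hTc)]
    rw [hμ]
    apply setIntegral_congr_fun measurableSet_Ioc
    intro y hy
    have e1 : (fun x => ({p : ℝ × ℝ | p.2 ≤ p.1}ᶜ).indicator
        (fun p => f p.1 * h p.2) (x, y))
        = (Set.Iio y).indicator (fun x => f x * h y) := by
      funext x
      by_cases hxy : x < y
      · simp [Set.indicator, Set.mem_setOf_eq, hxy, not_le.mpr hxy]
      · simp [Set.indicator, Set.mem_setOf_eq, hxy, not_lt.mp hxy]
    dsimp only
    rw [show (∫ x in Set.Ioc a b, ({p : ℝ × ℝ | p.2 ≤ p.1}ᶜ).indicator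
        (fun p => f p.1 * h p.2) (x, y)) = ∫ x in Set.Ioc a b,
        (Set.Iio y).indicator (fun x => f x * h y) x from
      integral_congr_ae (.of_forall fun x => congrFun e1 x)]
    rw [integral_indicator measurableSet_Iio,
      Measure.restrict_restrict measurableSet_Iio]
    have e2 : Set.Iio y ∩ Set.Ioc a b = Set.Ioo a y := by
      ext t
      simp only [Set.mem_inter_iff, Set.mem_Iio, Set.mem_Ioc, Set.mem_Ioo]
      constructor
      · rintro ⟨h1', h2', _⟩; exact ⟨h2', h1'⟩
      · rintro ⟨h1', h2'⟩; exact ⟨h2', h1', le_trans h2'.le hy.2⟩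
    rw [e2, ← integral_Ioc_eq_integral_Ioo, integral_mul_const, mul_comm]
  rw [h1, h2] at hsplit
  exact hsplit.symm
lemma contOn_mul_integrableOn {a b : ℝ} {φ ψ : ℝ → ℝ}
    (hφ : ContinuousOn φ (Set.Icc a b)) (hψ : IntegrableOn ψ (Set.Icc a b)) :
    IntegrableOn (fun t => φ t * ψ t) (Set.Icc a b) := by
  rcases IsCompact.exists_bound_of_continuousOn isCompact_Icc hφ with ⟨M, hM⟩
  exact Integrable.bdd_mul hψ (hφ.aestronglyMeasurable measurableSet_Icc)
    ((ae_restrict_iff' measurableSet_Icc).2 (.of_forall hM))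

lemma exp_primitive {a b : ℝ} (hab : a ≤ b) {g : ℝ → ℝ}
    (hg : ContinuousOn g (Set.Icc a b)) :
    ∫ τ in a..b, g τ * Real.exp (∫ r in τ..b, g r)
      = Real.exp (∫ r in a..b, g r) - 1 := by
  set Γ : ℝ → ℝ := fun t => ∫ r in a..t, g r with hΓdef
  have huIcc : Set.uIcc a b = Set.Icc a b := Set.uIcc_of_le hab
  have hgint : ∀ x y, x ∈ Set.Icc a b → y ∈ Set.Icc a b →
      IntervalIntegrable g volume x y := by
    intro x y hx hy
    apply ContinuousOn.intervalIntegrable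
    apply hg.mono
    rw [← huIcc]
    exact Set.uIcc_subset_uIcc (huIcc ▸ hx) (huIcc ▸ hy)
  have hΓcont : ContinuousOn Γ (Set.Icc a b) := by
    rw [← huIcc]
    exact intervalIntegral.continuousOn_primitive_interval
      (by rw [huIcc]; exact hg.integrableOn_compact isCompact_Icc)
  have hadj : ∀ τ ∈ Set.Icc a b, (∫ r in τ..b, g r) = Γ b - Γ τ := by
    intro τ hτ
    have := intervalIntegral.integral_add_adjacent_intervals
      (hgint a τ ⟨le_refl a, hab⟩ hτ) (hgint τ b hτ ⟨hab, le_refl b⟩)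
    simp only [hΓdef]
    linarith [this]
  have hcongr : ∀ τ ∈ Set.uIcc a b,
      g τ * Real.exp (∫ r in τ..b, g r) = g τ * Real.exp (Γ b - Γ τ) := by
    intro τ hτ; rw [hadj τ (huIcc ▸ hτ)]
  rw [intervalIntegral.integral_congr hcongr]
  have hcont : ContinuousOn (fun t => -Real.exp (Γ b - Γ t)) (Set.Icc a b) :=
    (Real.continuous_exp.comp_continuousOn (continuousOn_const.sub hΓcont)).neg
  have hderiv : ∀ τ ∈ Set.Ioo a b,
      HasDerivWithinAt (fun t => -Real.exp (Γ b - Γ t))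
        (g τ * Real.exp (Γ b - Γ τ)) (Set.Ioi τ) τ := by
    intro τ hτ
    have hΓd : HasDerivAt Γ (g τ) τ := by
      apply intervalIntegral.integral_hasDerivAt_right
        (hgint a τ ⟨le_refl a, hab⟩ ⟨hτ.1.le, hτ.2.le⟩)
      · exact ContinuousOn.stronglyMeasurableAtFilter isOpen_Ioo
          (hg.mono Set.Ioo_subset_Icc_self) τ hτ
      · exact hg.continuousAt (Icc_mem_nhds hτ.1 hτ.2)
    have h1 : HasDerivAt (fun t => -Real.exp (Γ b - Γ t))
        (g τ * Real.exp (Γ b - Γ τ)) τ := by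
      have := (((hasDerivAt_const τ (Γ b)).sub hΓd).exp).neg
      exact this.congr_deriv (by simp only [Pi.sub_apply]; ring)
    exact h1.hasDerivWithinAt
  have hint : IntervalIntegrable (fun τ => g τ * Real.exp (Γ b - Γ τ)) volume a b := by
    apply ContinuousOn.intervalIntegrable
    rw [huIcc]
    exact hg.mul (Real.continuous_exp.comp_continuousOn (continuousOn_const.sub hΓcont))
  have := intervalIntegral.integral_eq_sub_of_hasDeriv_right_of_le hab hcont hderiv hint
  rw [this]
  have hΓa : Γ a = 0 := intervalIntegral.integral_same
  rw [hΓa]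
  show -Real.exp (Γ b - Γ b) - -Real.exp (Γ b - 0) = Real.exp (Γ b) - 1
  rw [sub_zero, sub_self, Real.exp_zero]
  ring

lemma sq_primitive {a b : ℝ} (hab : a ≤ b) {ψ : ℝ → ℝ}
    (hψ : IntegrableOn ψ (Set.Icc a b)) (w₀ : ℝ) :
    (w₀ + ∫ τ in a..b, ψ τ) ^ 2
      = w₀ ^ 2 + ∫ τ in a..b, 2 * ψ τ * (w₀ + ∫ σ in a..τ, ψ σ) := by
  have hψ' : IntegrableOn ψ (Set.Ioc a b) := hψ.mono_set Set.Ioc_subset_Icc_self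
  have key := fubini_parts_set hψ' hψ'
  set Ψ : ℝ → ℝ := fun τ => ∫ σ in Set.Ioc a τ, ψ σ with hΨ
  have hΨcont : ContinuousOn Ψ (Set.Icc a b) := intervalIntegral.continuousOn_primitive hψ
  have hψΨ : IntegrableOn (fun τ => ψ τ * Ψ τ) (Set.Ioc a b) :=
    ((contOn_mul_integrableOn hΨcont hψ).mono_set Set.Ioc_subset_Icc_self).congr
      (Filter.Eventually.of_forall fun x => mul_comm _ _)
  have e1 : (∫ τ in a..b, 2 * ψ τ * (w₀ + ∫ σ in a..τ, ψ σ))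
      = ∫ τ in Set.Ioc a b, (2 * w₀ * ψ τ + 2 * (ψ τ * Ψ τ)) := by
    rw [intervalIntegral.integral_of_le hab]
    apply setIntegral_congr_fun measurableSet_Ioc
    intro τ hτ
    dsimp only
    rw [intervalIntegral.integral_of_le hτ.1.le]
    ring
  rw [intervalIntegral.integral_of_le hab, e1,
    integral_add (hψ'.const_mul _) (hψΨ.const_mul 2),
    MeasureTheory.integral_const_mul, MeasureTheory.integral_const_mul]
  linear_combination key

lemma gronwall_int {a S : ℝ} (haS : a ≤ S) {u B g : ℝ → ℝ}
    (hu : ContinuousOn u (Set.Icc a S)) (hB : ContinuousOn B (Set.Icc a S))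
    (hg : ContinuousOn g (Set.Icc a S)) (hgpos : ∀ t ∈ Set.Icc a S, 0 ≤ g t)
    (hub : ∀ t ∈ Set.Icc a S, u t ≤ B t + ∫ τ in a..t, g τ * u τ) :
    u S ≤ B S + ∫ τ in a..S, g τ * B τ * Real.exp (∫ r in τ..S, g r) := by
  have huIcc : Set.uIcc a S = Set.Icc a S := Set.uIcc_of_le haS
  have subint : ∀ {φ : ℝ → ℝ}, ContinuousOn φ (Set.Icc a S) → ∀ x y, x ∈ Set.Icc a S →
      y ∈ Set.Icc a S → IntervalIntegrable φ volume x y := by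
    intro φ hφ x y hx hy
    apply ContinuousOn.intervalIntegrable
    exact hφ.mono (by rw [← huIcc]; exact Set.uIcc_subset_uIcc (huIcc ▸ hx) (huIcc ▸ hy))
  have hgu : ContinuousOn (fun t => g t * u t) (Set.Icc a S) := hg.mul hu
  set V : ℝ → ℝ := fun t => ∫ τ in a..t, g τ * u τ with hV
  set Γ : ℝ → ℝ := fun t => ∫ r in a..t, g r with hΓ
  have hVcont : ContinuousOn V (Set.Icc a S) := by
    rw [← huIcc]; exact intervalIntegral.continuousOn_primitive_interval
      (by rw [huIcc]; exact hgu.integrableOn_compact isCompact_Icc)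
  have hΓcont : ContinuousOn Γ (Set.Icc a S) := by
    rw [← huIcc]; exact intervalIntegral.continuousOn_primitive_interval
      (by rw [huIcc]; exact hg.integrableOn_compact isCompact_Icc)
  have hWcont : ContinuousOn (fun t => V t * Real.exp (-Γ t)) (Set.Icc a S) :=
    hVcont.mul (Real.continuous_exp.comp_continuousOn hΓcont.neg)
  have hderiv : ∀ t ∈ Set.Ioo a S,
      HasDerivWithinAt (fun t => V t * Real.exp (-Γ t))
        ((g t * u t - g t * V t) * Real.exp (-Γ t)) (Set.Ioi t) t := by
    intro t ht
    have hVd : HasDerivAt V (g t * u t) t :=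
      intervalIntegral.integral_hasDerivAt_right
        (subint hgu a t ⟨le_refl a, haS⟩ ⟨ht.1.le, ht.2.le⟩)
        (ContinuousOn.stronglyMeasurableAtFilter isOpen_Ioo
          (hgu.mono Set.Ioo_subset_Icc_self) t ht)
        (hgu.continuousAt (Icc_mem_nhds ht.1 ht.2))
    have hΓd : HasDerivAt Γ (g t) t :=
      intervalIntegral.integral_hasDerivAt_right
        (subint hg a t ⟨le_refl a, haS⟩ ⟨ht.1.le, ht.2.le⟩)
        (ContinuousOn.stronglyMeasurableAtFilter isOpen_Ioo
          (hg.mono Set.Ioo_subset_Icc_self) t ht)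
        (hg.continuousAt (Icc_mem_nhds ht.1 ht.2))
    have hprod := hVd.mul (hΓd.neg.exp)
    refine HasDerivAt.hasDerivWithinAt ?_
    exact hprod.congr_deriv (by simp only [Pi.neg_apply]; ring)
  have hintW : IntervalIntegrable
      (fun t => (g t * u t - g t * V t) * Real.exp (-Γ t)) volume a S := by
    apply ContinuousOn.intervalIntegrable
    rw [huIcc]
    exact (hgu.sub (hg.mul hVcont)).mul
      (Real.continuous_exp.comp_continuousOn hΓcont.neg)
  have hW := intervalIntegral.integral_eq_sub_of_hasDeriv_right_of_le haS hWcont hderiv hintW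
  have hVa : V a = 0 := intervalIntegral.integral_same
  have hintD : IntervalIntegrable (fun t => g t * B t * Real.exp (-Γ t)) volume a S := by
    apply ContinuousOn.intervalIntegrable
    rw [huIcc]
    exact (hg.mul hB).mul (Real.continuous_exp.comp_continuousOn hΓcont.neg)
  have hmono : (∫ t in a..S, (g t * u t - g t * V t) * Real.exp (-Γ t))
      ≤ ∫ t in a..S, g t * B t * Real.exp (-Γ t) := by
    apply intervalIntegral.integral_mono_on haS hintW hintD
    intro t ht
    have h1 : u t ≤ B t + V t := hub t ht
    have h2 : (0:ℝ) ≤ Real.exp (-Γ t) := (Real.exp_pos _).le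
    have h3 : 0 ≤ g t := hgpos t ht
    have h4 : g t * u t - g t * V t ≤ g t * B t := by nlinarith
    exact mul_le_mul_of_nonneg_right h4 h2
  have hVS : V S ≤ Real.exp (Γ S) * ∫ t in a..S, g t * B t * Real.exp (-Γ t) := by
    have h5 : V S * Real.exp (-Γ S) ≤ ∫ t in a..S, g t * B t * Real.exp (-Γ t) := by
      rw [hW] at hmono
      rw [hVa] at hmono
      simpa using hmono
    have h6 := mul_le_mul_of_nonneg_right h5 (Real.exp_pos (Γ S)).le
    calc V S = V S * Real.exp (-Γ S) * Real.exp (Γ S) := by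
          rw [mul_assoc, ← Real.exp_add]; simp
      _ ≤ (∫ t in a..S, g t * B t * Real.exp (-Γ t)) * Real.exp (Γ S) := h6
      _ = _ := by ring
  have hfin : Real.exp (Γ S) * (∫ t in a..S, g t * B t * Real.exp (-Γ t))
      = ∫ τ in a..S, g τ * B τ * Real.exp (∫ r in τ..S, g r) := by
    rw [← intervalIntegral.integral_const_mul]
    apply intervalIntegral.integral_congr
    intro τ hτ
    rw [huIcc] at hτ
    dsimp only
    have hadj : (∫ r in τ..S, g r) = Γ S - Γ τ := by
      have := intervalIntegral.integral_add_adjacent_intervals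
        (subint hg a τ ⟨le_refl a, haS⟩ hτ) (subint hg τ S hτ ⟨haS, le_refl S⟩)
      simp only [hΓ]; linarith
    rw [hadj, show Real.exp (Γ S - Γ τ) = Real.exp (Γ S) * Real.exp (-Γ τ) from by
      rw [← Real.exp_add]; ring_nf]
    ring
  have hS := hub S ⟨haS, le_refl S⟩
  calc u S ≤ B S + V S := hS
    _ ≤ B S + Real.exp (Γ S) * (∫ t in a..S, g t * B t * Real.exp (-Γ t)) := by
        linarith [hVS]
    _ = B S + ∫ τ in a..S, g τ * B τ * Real.exp (∫ r in τ..S, g r) := by rw [hfin]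

set_option maxHeartbeats 1600000 in
/-- Uniform estimate for solutions of the perturbed oscillator ODE
`z″ + c²(1+G)⁻¹ z = k` on `[s₀, s₁]`, where `z′` is absolutely continuous with a.e.
derivative `z″` (encoded through the integral representation of `z′`). -/
theorem perturbed_oscillator_estimate (c : ℝ) (hc : 0 < c) :
    ∃ C > (0 : ℝ),
      ∀ s₀ s₁ : ℝ, s₀ ≤ s₁ →
      ∀ G G' k z z' z'' : ℝ → ℝ, ∀ z₀ z₁ : ℝ,
        (∀ t ∈ Set.Icc s₀ s₁, HasDerivAt G (G' t) t) →
        ContinuousOn G' (Set.Icc s₀ s₁) →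
        (∀ t ∈ Set.Icc s₀ s₁, |G t| ≤ 1 / 3) →
        IntegrableOn k (Set.Icc s₀ s₁) →
        (∀ t ∈ Set.Icc s₀ s₁, HasDerivAt z (z' t) t) →
        ContinuousOn z' (Set.Icc s₀ s₁) →
        IntegrableOn z'' (Set.Icc s₀ s₁) →
        (∀ t ∈ Set.Icc s₀ s₁, z' t = z₁ + ∫ τ in s₀..t, z'' τ) →
        (∀ᵐ t ∂(volume.restrict (Set.Icc s₀ s₁)),
          z'' t + c ^ 2 / (1 + G t) * z t = k t) →
        z s₀ = z₀ →
        ∀ s ∈ Set.Icc s₀ s₁,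
          |z s| + |z' s| ≤
            C * (|z₀| + |z₁| + ∫ τ in s₀..s, |k τ|)
              + C * ∫ τ in s₀..s,
                  (|z₀| + |z₁| + ∫ η in s₀..τ, |k η|) * |G' τ|
                    * Real.exp (C * ∫ r in τ..s, |G' r|) := by
  have h2c : 0 < 2/c := by positivity
  set c' : ℝ := 2*c + 1 with hc'def
  set c'' : ℝ := 1 + 2/c with hc''def
  set C : ℝ := 2 + 3*c'' + c'*c'' with hCdef
  have hc'1 : 1 ≤ c' := by rw [hc'def]; nlinarith
  have hc''1 : 1 ≤ c'' := by rw [hc''def]; linarith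
  have hC32 : 3/2 ≤ C := by rw [hCdef]; nlinarith
  have hC1 : 1 ≤ C := by linarith
  have hCpos : 0 < C := by linarith
  refine ⟨C, hCpos, ?_⟩
  intro a b hab G G' k z z' z'' z₀ z₁ hG hG'c hGb hk hz hz'c hz'' hzrep hode hz0 s hs
  set I := Set.Icc a b with hIdef
  have hsa : a ≤ s := hs.1
  have hsb : s ≤ b := hs.2
  have haI : a ∈ I := ⟨le_refl a, hab⟩
  have hIsub : Set.Icc a s ⊆ I := Set.Icc_subset_Icc (le_refl a) hsb
  -- bounds on 1 + G
  have hw : ∀ t ∈ I, 2/3 ≤ 1 + G t ∧ 1 + G t ≤ 4/3 := by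
    intro t ht
    have := hGb t ht
    rw [abs_le] at this
    constructor <;> linarith only [this.1, this.2]
  have hwpos : ∀ t ∈ I, 0 < 1 + G t := by
    intro t ht; linarith [(hw t ht).1]
  set ω : ℝ → ℝ := fun t => c^2 / (1 + G t) with hωdef
  set ω' : ℝ → ℝ := fun t => -(c^2 * G' t) / (1 + G t)^2 with hω'def
  have hGcont : ContinuousOn G I := fun t ht => (hG t ht).continuousAt.continuousWithinAt
  have hzcont : ContinuousOn z I := fun t ht => (hz t ht).continuousAt.continuousWithinAt
  have hωcont : ContinuousOn ω I :=
    continuousOn_const.div (continuousOn_const.add hGcont) (fun t ht => (hwpos t ht).ne')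
  have hω'cont : ContinuousOn ω' I :=
    ((continuousOn_const.mul hG'c).neg).div ((continuousOn_const.add hGcont).pow 2)
      (fun t ht => pow_ne_zero 2 (hwpos t ht).ne')
  set E : ℝ → ℝ := fun t => ω t * z t^2 + z' t^2 with hEdef
  have hEcont : ContinuousOn E I := (hωcont.mul (hzcont.pow 2)).add (hz'c.pow 2)
  have hωnn : ∀ t ∈ I, 0 ≤ ω t := by
    intro t ht
    exact div_nonneg (sq_nonneg c) (hwpos t ht).le
  have hEnn : ∀ t ∈ I, 0 ≤ E t := by
    intro t ht
    exact add_nonneg (mul_nonneg (hωnn t ht) (sq_nonneg _)) (sq_nonneg _)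
  have hωub : ∀ t ∈ I, ω t ≤ 3/2*c^2 := by
    intro t ht
    rw [hωdef]
    rw [div_le_iff₀ (hwpos t ht)]
    nlinarith [(hw t ht).1, sq_nonneg c]
  have hz'a : z' a = z₁ := by simpa using hzrep a haI
  -- derivative of ω * z^2
  have hP : ∀ t ∈ I, HasDerivAt (fun x => ω x * z x ^ 2)
      (ω' t * z t^2 + ω t * (2 * z t * z' t)) t := by
    intro t ht
    have h1 : HasDerivAt (fun x => 1 + G x) (G' t) t := by
      exact ((hasDerivAt_const t (1:ℝ)).add (hG t ht)).congr_deriv (zero_add _)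
    have h2 : HasDerivAt ω (ω' t) t := by
      have h0 := (hasDerivAt_const t (c^2)).div h1 (hwpos t ht).ne'
      exact h0.congr_deriv (by simp only [hω'def]; ring)
    have h3 : HasDerivAt (fun x => z x ^ 2) (2 * z t * z' t) t := by
      have h0 := (hz t ht).pow 2
      exact h0.congr_deriv (by norm_num <;> ring)
    exact h2.mul h3
  -- energy identity
  have hEid : ∀ s' ∈ I, E s' = E a + ∫ τ in a..s', (ω' τ * z τ^2 + 2 * z' τ * k τ) := by
    intro s' hs'
    have has' : a ≤ s' := hs'.1
    have hsub : Set.Icc a s' ⊆ I := Set.Icc_subset_Icc (le_refl a) hs'.2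
    have huIcc' : Set.uIcc a s' = Set.Icc a s' := Set.uIcc_of_le has'
    have h1 : (∫ τ in a..s', (ω' τ * z τ^2 + ω τ * (2 * z τ * z' τ)))
        = ω s' * z s'^2 - ω a * z a^2 := by
      apply intervalIntegral.integral_eq_sub_of_hasDerivAt
      · intro x hx
        exact hP x (hsub (huIcc' ▸ hx))
      · apply ContinuousOn.intervalIntegrable
        rw [huIcc']
        exact (((hω'cont.mono hsub).mul ((hzcont.mono hsub).pow 2)).add
          ((hωcont.mono hsub).mul ((continuousOn_const.mul (hzcont.mono hsub)).mul
            (hz'c.mono hsub))))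
    have hintz'' : IntegrableOn z'' (Set.Icc a s') := hz''.mono_set hsub
    have h2 : z' s'^2 = z₁^2 + ∫ τ in a..s', 2 * z'' τ * z' τ := by
      have hcongr : ∀ τ ∈ Set.uIcc a s',
          2 * z'' τ * (z₁ + ∫ σ in a..τ, z'' σ) = 2 * z'' τ * z' τ := by
        intro τ hτ
        rw [← hzrep τ (hsub (huIcc' ▸ hτ))]
      calc z' s'^2 = (z₁ + ∫ τ in a..s', z'' τ)^2 := by
            rw [← hzrep s' (hsub ⟨has', le_refl s'⟩)]
        _ = z₁^2 + ∫ τ in a..s', 2 * z'' τ * (z₁ + ∫ σ in a..τ, z'' σ) :=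
            sq_primitive has' hintz'' z₁
        _ = z₁^2 + ∫ τ in a..s', 2 * z'' τ * z' τ := by
            rw [intervalIntegral.integral_congr hcongr]
    have int1 : IntervalIntegrable
        (fun τ => ω' τ * z τ^2 + ω τ * (2 * z τ * z' τ)) volume a s' := by
      apply ContinuousOn.intervalIntegrable
      rw [huIcc']
      exact (((hω'cont.mono hsub).mul ((hzcont.mono hsub).pow 2)).add
        ((hωcont.mono hsub).mul ((continuousOn_const.mul (hzcont.mono hsub)).mul
          (hz'c.mono hsub))))
    have int2 : IntervalIntegrable (fun τ => 2 * z'' τ * z' τ) volume a s' := by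
      have h0 : IntegrableOn (fun τ => 2 * z'' τ * z' τ) I :=
        (contOn_mul_integrableOn
          ((continuousOn_const : ContinuousOn (fun _ => (2:ℝ)) I).mul hz'c) hz'').congr
          (Filter.Eventually.of_forall fun x => by simp only [Pi.mul_apply]; ring)
      rw [intervalIntegrable_iff_integrableOn_Icc_of_le has']
      exact h0.mono_set hsub
    have hadd : (∫ τ in a..s', (ω' τ * z τ^2 + ω τ * (2 * z τ * z' τ)))
          + (∫ τ in a..s', 2 * z'' τ * z' τ)
        = ∫ τ in a..s', ((ω' τ * z τ^2 + ω τ * (2 * z τ * z' τ)) + 2 * z'' τ * z' τ) :=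
      (intervalIntegral.integral_add int1 int2).symm
    have hae : (∫ τ in a..s', ((ω' τ * z τ^2 + ω τ * (2 * z τ * z' τ)) + 2 * z'' τ * z' τ))
        = ∫ τ in a..s', (ω' τ * z τ^2 + 2 * z' τ * k τ) := by
      rw [intervalIntegral.integral_of_le has', intervalIntegral.integral_of_le has']
      apply setIntegral_congr_ae measurableSet_Ioc
      have h0 := (ae_restrict_iff' measurableSet_Icc).1 hode
      filter_upwards [h0] with t ht hts
      have htI : t ∈ I := hsub (Set.Ioc_subset_Icc_self hts)
      have hodet := ht htI
      rw [hωdef]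
      linear_combination 2 * z' t * hodet
    rw [hEdef]
    dsimp only
    rw [← hae, ← hadd, h1, h2, hz0, hz'a]
    simp only [hEdef, hωdef]
    ring

  -- pointwise bound on the energy integrand
  set g : ℝ → ℝ := fun t => 3/2 * |G' t| with hgdef
  have hgcont : ContinuousOn g I := continuousOn_const.mul hG'c.abs
  have hgnn : ∀ t, 0 ≤ g t := fun t => by rw [hgdef]; positivity
  have hptwise : ∀ t ∈ I, ω' t * z t^2 + 2 * z' t * k t
      ≤ g t * E t + 2 * Real.sqrt (E t) * |k t| := by
    intro t ht
    have hwp := hwpos t ht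
    have hw1 := (hw t ht).1
    have hb1 : ω' t * z t^2 ≤ g t * E t := by
      have e1 : ω' t * z t^2 ≤ |ω' t| * z t^2 :=
        mul_le_mul_of_nonneg_right (le_abs_self _) (sq_nonneg _)
      have e2 : |ω' t| = c^2 * |G' t| / (1 + G t)^2 := by
        rw [hω'def]
        dsimp only
        rw [abs_div, abs_neg, abs_mul, abs_of_nonneg (sq_nonneg c),
          abs_of_nonneg (sq_nonneg (1 + G t))]
      have e3 : c^2 * |G' t| / (1 + G t)^2 * z t^2
          = (c^2/(1 + G t) * z t^2) * (|G' t| / (1 + G t)) := by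
        field_simp
      have e4 : |G' t| / (1 + G t) ≤ 3/2 * |G' t| := by
        rw [div_le_iff₀ hwp]
        nlinarith only [abs_nonneg (G' t), hw1]
      have e5 : 0 ≤ c^2/(1 + G t) * z t^2 := mul_nonneg (hωnn t ht) (sq_nonneg _)
      have e6 : (c^2/(1 + G t) * z t^2) * (|G' t| / (1 + G t))
          ≤ (c^2/(1 + G t) * z t^2) * (3/2 * |G' t|) :=
        mul_le_mul_of_nonneg_left e4 e5
      have e7 : (c^2/(1 + G t) * z t^2) * (3/2 * |G' t|) ≤ g t * E t := by
        rw [hgdef, hEdef, hωdef, mul_comm]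
        dsimp only
        exact mul_le_mul_of_nonneg_left (le_add_of_nonneg_right (sq_nonneg _))
          (by positivity)
      calc ω' t * z t^2 ≤ |ω' t| * z t^2 := e1
        _ = c^2 * |G' t| / (1 + G t)^2 * z t^2 := by rw [e2]
        _ = (c^2/(1 + G t) * z t^2) * (|G' t| / (1 + G t)) := e3
        _ ≤ (c^2/(1 + G t) * z t^2) * (3/2 * |G' t|) := e6
        _ ≤ g t * E t := e7
    have hz'E : |z' t| ≤ Real.sqrt (E t) := by
      rw [← Real.sqrt_sq_eq_abs]
      apply Real.sqrt_le_sqrt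
      rw [hEdef]
      dsimp only
      linarith only [mul_nonneg (hωnn t ht) (sq_nonneg (z t))]
    have hb2 : 2 * z' t * k t ≤ 2 * Real.sqrt (E t) * |k t| := by
      have e1 : z' t * k t ≤ |z' t * k t| := le_abs_self _
      rw [abs_mul] at e1
      have e2 : |z' t| * |k t| ≤ Real.sqrt (E t) * |k t| :=
        mul_le_mul_of_nonneg_right hz'E (abs_nonneg _)
      linarith only [e1, e2]
    linarith only [hb1, hb2]
  set F : ℝ → ℝ := fun t => Real.sqrt (E t) with hFdef
  have hFcont : ContinuousOn F (Set.Icc a s) :=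
    Real.continuous_sqrt.comp_continuousOn (hEcont.mono hIsub)
  obtain ⟨ts, hts, htmax⟩ :=
    IsCompact.exists_isMaxOn isCompact_Icc (Set.nonempty_Icc.2 hsa) hFcont
  set M : ℝ := F ts with hMdef
  have hMnn : 0 ≤ M := Real.sqrt_nonneg _
  have hFM : ∀ t ∈ Set.Icc a s, F t ≤ M := fun t ht => htmax ht
  set K : ℝ → ℝ := fun t => ∫ τ in a..t, |k τ| with hKdef
  have hkabs : IntegrableOn (fun t => |k t|) I := hk.abs
  have hKcont : ContinuousOn K I := by
    have h0 : ContinuousOn (fun x => ∫ t in a..x, |k t|) (Set.uIcc a b) :=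
      intervalIntegral.continuousOn_primitive_interval
        (by rw [Set.uIcc_of_le hab]; exact hkabs)
    rw [Set.uIcc_of_le hab] at h0
    exact h0
  have hsubint : ∀ {φ : ℝ → ℝ}, IntegrableOn φ I → ∀ x y, x ∈ I → y ∈ I →
      IntervalIntegrable φ volume x y := by
    intro φ hφ x y hx hy
    rw [intervalIntegrable_iff]
    apply hφ.mono_set
    apply subset_trans Set.uIoc_subset_uIcc
    have h0 : Set.uIcc x y ⊆ Set.uIcc a b :=
      Set.uIcc_subset_uIcc ((Set.uIcc_of_le hab) ▸ hx) ((Set.uIcc_of_le hab) ▸ hy)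
    rwa [Set.uIcc_of_le hab] at h0
  have hKnn : ∀ t ∈ I, 0 ≤ K t := by
    intro t ht
    rw [hKdef]
    exact intervalIntegral.integral_nonneg ht.1 (fun τ _ => abs_nonneg _)
  have hKmono : ∀ x y, x ∈ I → y ∈ I → x ≤ y → K x ≤ K y := by
    intro x y hx hy hxy
    have hsplit := intervalIntegral.integral_add_adjacent_intervals
      (hsubint hkabs a x haI hx) (hsubint hkabs x y hx hy)
    have h2 : 0 ≤ ∫ τ in x..y, |k τ| :=
      intervalIntegral.integral_nonneg hxy (fun τ _ => abs_nonneg _)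
    rw [hKdef]
    dsimp only
    linarith only [hsplit, h2]
  have htsI : ts ∈ I := hIsub hts
  have hats : a ≤ ts := hts.1
  have htss : ts ≤ s := hts.2
  have hsubts : Set.Icc a ts ⊆ I := Set.Icc_subset_Icc (le_refl a) htsI.2
  set B : ℝ → ℝ := fun t => E a + 2*M*(K t) with hBdef
  have hBcont : ContinuousOn B I := continuousOn_const.add (continuousOn_const.mul hKcont)
  have hBnn : ∀ t ∈ I, 0 ≤ B t := by
    intro t ht
    have h1 := hKnn t ht
    have h2 := hEnn a haI
    rw [hBdef]
    dsimp only
    exact add_nonneg h2 (mul_nonneg (mul_nonneg (by norm_num) hMnn) h1)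
  have hub : ∀ t ∈ Set.Icc a ts, E t ≤ B t + ∫ τ in a..t, g τ * E τ := by
    intro t ht
    have htI : t ∈ I := hsubts ht
    have hat : a ≤ t := ht.1
    have hsubt : Set.Icc a t ⊆ I := Set.Icc_subset_Icc (le_refl a) htI.2
    have hi1 : IntervalIntegrable (fun τ => ω' τ * z τ^2 + 2 * z' τ * k τ) volume a t := by
      apply IntervalIntegrable.add
      · apply ContinuousOn.intervalIntegrable
        rw [Set.uIcc_of_le hat]
        exact (hω'cont.mono hsubt).mul ((hzcont.mono hsubt).pow 2)
      · exact hsubint (contOn_mul_integrableOn ((continuousOn_const :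
          ContinuousOn (fun _ => (2:ℝ)) I).mul hz'c) hk) a t haI htI
    have ii1 : IntervalIntegrable (fun τ => g τ * E τ) volume a t := by
      apply ContinuousOn.intervalIntegrable
      rw [Set.uIcc_of_le hat]
      exact (hgcont.mono hsubt).mul (hEcont.mono hsubt)
    have ii2 : IntervalIntegrable (fun τ => 2*M*|k τ|) volume a t :=
      hsubint (hkabs.const_mul (2*M)) a t haI htI
    have hmono : (∫ τ in a..t, (ω' τ * z τ^2 + 2 * z' τ * k τ))
        ≤ ∫ τ in a..t, (g τ * E τ + 2*M*|k τ|) := by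
      apply intervalIntegral.integral_mono_on hat hi1 (ii1.add ii2)
      intro τ hτ
      have hτI := hsubt hτ
      have hτs : τ ∈ Set.Icc a s := ⟨hτ.1, le_trans hτ.2 (le_trans ht.2 htss)⟩
      have h1 := hptwise τ hτI
      have h2 : Real.sqrt (E τ) ≤ M := hFM τ hτs
      have h3 : 2*Real.sqrt (E τ)*|k τ| ≤ 2*M*|k τ| := by
        nlinarith only [abs_nonneg (k τ), h2, Real.sqrt_nonneg (E τ)]
      linarith only [h1, h3]
    have hsplit : (∫ τ in a..t, (g τ * E τ + 2*M*|k τ|))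
        = (∫ τ in a..t, g τ * E τ) + 2*M*(K t) := by
      rw [intervalIntegral.integral_add ii1 ii2, intervalIntegral.integral_const_mul]
    have hEidt := hEid t htI
    rw [hBdef]
    dsimp only
    linarith only [hEidt, hmono, hsplit]
  have hgron := gronwall_int hats (hEcont.mono hsubts) (hBcont.mono hsubts)
    (hgcont.mono hsubts) (fun t _ => hgnn t) hub
  -- lower bound for ω (for z ≤ F step)
  have hωlb : ∀ t ∈ I, 3/4*c^2 ≤ ω t := by
    intro t ht
    rw [hωdef]
    dsimp only
    rw [le_div_iff₀ (hwpos t ht)]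
    nlinarith only [(hw t ht).2, sq_nonneg c]
  -- abbreviations for the tail variation
  have hG'abs : IntegrableOn (fun t => |G' t|) I :=
    (hG'c.abs).integrableOn_compact isCompact_Icc
  set X : ℝ → ℝ := fun τ => ∫ r in τ..s, |G' r| with hXdef
  have hXcont : ContinuousOn X (Set.Icc a s) := by
    have h0 : ContinuousOn (fun x => ∫ t in x..s, |G' t|) (Set.uIcc a s) :=
      intervalIntegral.continuousOn_primitive_interval_left
        (by rw [Set.uIcc_of_le hsa]; exact hG'abs.mono_set hIsub)
    rw [Set.uIcc_of_le hsa] at h0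
    exact h0
  have hXnn : ∀ τ ∈ Set.Icc a s, 0 ≤ X τ := by
    intro τ hτ
    rw [hXdef]
    exact intervalIntegral.integral_nonneg hτ.2 (fun r _ => abs_nonneg _)
  have hXg : ∀ τ : ℝ, (∫ r in τ..s, g r) = 3/2 * X τ := by
    intro τ
    rw [hgdef, hXdef]
    exact intervalIntegral.integral_const_mul _ _
  have hXgcont : ContinuousOn (fun τ => ∫ r in τ..s, g r) (Set.Icc a s) := by
    have h0 : ContinuousOn (fun τ => 3/2 * X τ) (Set.Icc a s) :=
      continuousOn_const.mul hXcont
    exact h0.congr (fun τ _ => hXg τ)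
  -- Step A : extend the Gronwall bound from ts to s
  have hBts : B ts ≤ B s := by
    have h1 := hKmono ts s htsI hs htss
    have h2 : 2*M*(K ts) ≤ 2*M*(K s) :=
      mul_le_mul_of_nonneg_left h1 (by linarith only [hMnn])
    rw [hBdef]
    dsimp only
    linarith only [h2]
  have hgint2 : ∀ x y, x ∈ I → y ∈ I → IntervalIntegrable g volume x y := by
    intro x y hx hy
    exact hsubint (hgcont.integrableOn_compact isCompact_Icc) x y hx hy
  have hEA : E ts ≤ B s + ∫ τ in a..s, g τ * B τ * Real.exp (∫ r in τ..s, g r) := by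
    have hsI : s ∈ I := hs
    -- pointwise comparison of exponents on [a, ts]
    have hexple : ∀ τ ∈ Set.Icc a ts,
        g τ * B τ * Real.exp (∫ r in τ..ts, g r)
          ≤ g τ * B τ * Real.exp (∫ r in τ..s, g r) := by
      intro τ hτ
      have hτI : τ ∈ I := hsubts hτ
      have hadj := intervalIntegral.integral_add_adjacent_intervals
        (hgint2 τ ts hτI htsI) (hgint2 ts s htsI hsI)
      have hpos : 0 ≤ ∫ r in ts..s, g r :=
        intervalIntegral.integral_nonneg htss (fun r _ => hgnn r)
      have hle : (∫ r in τ..ts, g r) ≤ ∫ r in τ..s, g r := by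
        linarith only [hadj, hpos]
      have hgB : 0 ≤ g τ * B τ := mul_nonneg (hgnn τ) (hBnn τ hτI)
      exact mul_le_mul_of_nonneg_left (Real.exp_le_exp.2 hle) hgB
    have hcont1 : ContinuousOn (fun τ => g τ * B τ * Real.exp (∫ r in τ..ts, g r))
        (Set.Icc a ts) := by
      have h0 : ContinuousOn (fun τ => ∫ r in τ..ts, g r) (Set.Icc a ts) := by
        have h1 : ContinuousOn (fun x => ∫ t in x..ts, g t) (Set.uIcc a ts) :=
          intervalIntegral.continuousOn_primitive_interval_left
            (by rw [Set.uIcc_of_le hats]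
                exact (hgcont.integrableOn_compact isCompact_Icc).mono_set hsubts)
        rw [Set.uIcc_of_le hats] at h1
        exact h1
      exact ((hgcont.mono hsubts).mul (hBcont.mono hsubts)).mul
        (Real.continuous_exp.comp_continuousOn h0)
    have hcont2 : ContinuousOn (fun τ => g τ * B τ * Real.exp (∫ r in τ..s, g r))
        (Set.Icc a s) :=
      ((hgcont.mono hIsub).mul (hBcont.mono hIsub)).mul
        (Real.continuous_exp.comp_continuousOn hXgcont)
    have hii1 : IntervalIntegrable (fun τ => g τ * B τ * Real.exp (∫ r in τ..ts, g r))
        volume a ts := by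
      apply ContinuousOn.intervalIntegrable
      rw [Set.uIcc_of_le hats]
      exact hcont1
    have hii2 : IntervalIntegrable (fun τ => g τ * B τ * Real.exp (∫ r in τ..s, g r))
        volume a ts := by
      apply ContinuousOn.intervalIntegrable
      rw [Set.uIcc_of_le hats]
      exact hcont2.mono (Set.Icc_subset_Icc (le_refl a) htss)
    have hii3 : IntervalIntegrable (fun τ => g τ * B τ * Real.exp (∫ r in τ..s, g r))
        volume ts s := by
      apply ContinuousOn.intervalIntegrable
      rw [Set.uIcc_of_le htss]
      exact hcont2.mono (Set.Icc_subset_Icc hats (le_refl s))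
    have hmono1 : (∫ τ in a..ts, g τ * B τ * Real.exp (∫ r in τ..ts, g r))
        ≤ ∫ τ in a..ts, g τ * B τ * Real.exp (∫ r in τ..s, g r) :=
      intervalIntegral.integral_mono_on hats hii1 hii2 hexple
    have hadj2 := intervalIntegral.integral_add_adjacent_intervals hii2 hii3
    have hpos2 : 0 ≤ ∫ τ in ts..s, g τ * B τ * Real.exp (∫ r in τ..s, g r) := by
      apply intervalIntegral.integral_nonneg htss
      intro τ hτ
      have hτI : τ ∈ I := ⟨le_trans hats hτ.1, le_trans hτ.2 hsb⟩
      exact mul_nonneg (mul_nonneg (hgnn τ) (hBnn τ hτI)) (Real.exp_pos _).le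
    linarith only [hgron, hBts, hmono1, hadj2, hpos2]
  -- Step B : split the integral
  have hkabs2 : ∀ x y, x ∈ I → y ∈ I → IntervalIntegrable (fun t => |k t|) volume x y :=
    fun x y hx hy => hsubint hkabs x y hx hy
  set JK : ℝ := ∫ τ in a..s, g τ * K τ * Real.exp (∫ r in τ..s, g r) with hJKdef
  have hsplitB : (∫ τ in a..s, g τ * B τ * Real.exp (∫ r in τ..s, g r))
      = E a * (∫ τ in a..s, g τ * Real.exp (∫ r in τ..s, g r)) + 2*M*JK := by
    have hcongr : ∀ τ ∈ Set.uIcc a s,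
        g τ * B τ * Real.exp (∫ r in τ..s, g r)
          = E a * (g τ * Real.exp (∫ r in τ..s, g r))
            + 2*M*(g τ * K τ * Real.exp (∫ r in τ..s, g r)) := by
      intro τ hτ
      rw [hBdef]
      dsimp only
      ring
    rw [intervalIntegral.integral_congr hcongr, intervalIntegral.integral_add, hJKdef,
      intervalIntegral.integral_const_mul, intervalIntegral.integral_const_mul]
    · apply IntervalIntegrable.const_mul
      apply ContinuousOn.intervalIntegrable
      rw [Set.uIcc_of_le hsa]
      exact (hgcont.mono hIsub).mul (Real.continuous_exp.comp_continuousOn hXgcont)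
    · apply IntervalIntegrable.const_mul
      apply ContinuousOn.intervalIntegrable
      rw [Set.uIcc_of_le hsa]
      exact ((hgcont.mono hIsub).mul (hKcont.mono hIsub)).mul
        (Real.continuous_exp.comp_continuousOn hXgcont)
  have hJ : (∫ τ in a..s, g τ * Real.exp (∫ r in τ..s, g r))
      = Real.exp (∫ r in a..s, g r) - 1 :=
    exp_primitive hsa (hgcont.mono hIsub)
  have hM2 : M^2 = E ts := by
    rw [hMdef, hFdef]
    exact Real.sq_sqrt (hEnn ts htsI)
  set Q : ℝ := K s + JK with hQdef
  set P : ℝ := E a * Real.exp (∫ r in a..s, g r) with hPdef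
  have hquad : M^2 ≤ P + 2*M*Q := by
    rw [hM2, hPdef, hQdef]
    have hBs : B s = E a + 2*M*(K s) := by rw [hBdef]
    have hprod : E a * (∫ τ in a..s, g τ * Real.exp (∫ r in τ..s, g r))
        = E a * (Real.exp (∫ r in a..s, g r) - 1) := by rw [hJ]
    linarith only [hEA, hsplitB, hBs, hprod]
  have hJKnn : 0 ≤ JK := by
    rw [hJKdef]
    apply intervalIntegral.integral_nonneg hsa
    intro τ hτ
    exact mul_nonneg (mul_nonneg (hgnn τ) (hKnn τ (hIsub hτ))) (Real.exp_pos _).le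
  have hKsnn : 0 ≤ K s := hKnn s hs
  have hQnn : 0 ≤ Q := by rw [hQdef]; linarith only [hJKnn, hKsnn]
  have hPnn : 0 ≤ P := by
    rw [hPdef]
    exact mul_nonneg (hEnn a haI) (Real.exp_pos _).le
  -- Step C : solve the quadratic inequality
  have hMle : M ≤ 2*Q + Real.sqrt P := by
    have h1 : (M - Q)^2 ≤ P + Q^2 := by nlinarith only [hquad]
    have h2 : M - Q ≤ Real.sqrt (P + Q^2) := by
      calc M - Q ≤ |M - Q| := le_abs_self _
        _ = Real.sqrt ((M - Q)^2) := (Real.sqrt_sq_eq_abs _).symm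
        _ ≤ Real.sqrt (P + Q^2) := Real.sqrt_le_sqrt h1
    have h3 : Real.sqrt (P + Q^2) ≤ Real.sqrt P + Q := by
      have h4 : P + Q^2 ≤ (Real.sqrt P + Q)^2 := by
        nlinarith only [Real.sq_sqrt hPnn, Real.sqrt_nonneg P, hQnn]
      calc Real.sqrt (P + Q^2) ≤ Real.sqrt ((Real.sqrt P + Q)^2) := Real.sqrt_le_sqrt h4
        _ = Real.sqrt P + Q := Real.sqrt_sq (by positivity)
    linarith only [h2, h3]
  -- Step D : bound sqrt P
  have hXa : (∫ r in a..s, g r) = 3/2 * X a := hXg a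
  have hXann : 0 ≤ X a := hXnn a ⟨le_refl a, hsa⟩
  set A₀ : ℝ := |z₀| + |z₁| with hA₀def
  have hA₀nn : 0 ≤ A₀ := by rw [hA₀def]; positivity
  have hEa : E a = ω a * z₀^2 + z₁^2 := by
    rw [hEdef]
    dsimp only
    rw [hz0, hz'a]
  have hsqrtEa : Real.sqrt (E a) ≤ c' * A₀ := by
    have h1 : E a ≤ (2*c*|z₀| + |z₁|)^2 := by
      rw [hEa]
      nlinarith only [hωub a haI, sq_nonneg z₀, sq_nonneg c, sq_abs z₀, sq_abs z₁,
        mul_nonneg (mul_nonneg (by linarith only [hc] : (0:ℝ) ≤ 2*c) (abs_nonneg z₀))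
          (abs_nonneg z₁), sq_nonneg (z₀ - z₁)]
    have h2 : Real.sqrt (E a) ≤ 2*c*|z₀| + |z₁| := by
      calc Real.sqrt (E a) ≤ Real.sqrt ((2*c*|z₀| + |z₁|)^2) := Real.sqrt_le_sqrt h1
        _ = 2*c*|z₀| + |z₁| := Real.sqrt_sq (by positivity)
    rw [hc'def, hA₀def]
    nlinarith only [h2, abs_nonneg z₀, abs_nonneg z₁, mul_nonneg hc.le (abs_nonneg z₁)]
  have hsqrtP : Real.sqrt P ≤ c' * A₀ * Real.exp (X a) := by
    have h1 : Real.sqrt P = Real.sqrt (E a) * Real.exp ((3/4) * X a) := by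
      rw [hPdef, hXa, Real.sqrt_mul (hEnn a haI)]
      congr 1
      have h2 : Real.exp (3/2 * X a) = (Real.exp ((3/4) * X a))^2 := by
        rw [sq, ← Real.exp_add]
        ring_nf
      rw [h2, Real.sqrt_sq (Real.exp_pos _).le]
    rw [h1]
    have h3 : Real.exp ((3/4) * X a) ≤ Real.exp (X a) :=
      Real.exp_le_exp.2 (by linarith only [hXann])
    have h4 : 0 ≤ Real.sqrt (E a) := Real.sqrt_nonneg _
    calc Real.sqrt (E a) * Real.exp ((3/4) * X a)
        ≤ Real.sqrt (E a) * Real.exp (X a) := mul_le_mul_of_nonneg_left h3 h4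
      _ ≤ (c' * A₀) * Real.exp (X a) :=
          mul_le_mul_of_nonneg_right hsqrtEa (Real.exp_pos _).le
  -- Step E : comparisons with the target integral T'
  set T' : ℝ := ∫ τ in a..s, (A₀ + K τ) * |G' τ| * Real.exp (C * X τ) with hT'def
  have hT'cont : ContinuousOn (fun τ => (A₀ + K τ) * |G' τ| * Real.exp (C * X τ))
      (Set.Icc a s) :=
    ((continuousOn_const.add (hKcont.mono hIsub)).mul ((hG'c.abs).mono hIsub)).mul
      (Real.continuous_exp.comp_continuousOn (continuousOn_const.mul hXcont))
  have hT'int : IntervalIntegrable (fun τ => (A₀ + K τ) * |G' τ| * Real.exp (C * X τ))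
      volume a s := by
    apply ContinuousOn.intervalIntegrable
    rw [Set.uIcc_of_le hsa]
    exact hT'cont
  have hT'nn : 0 ≤ T' := by
    rw [hT'def]
    apply intervalIntegral.integral_nonneg hsa
    intro τ hτ
    have := hKnn τ (hIsub hτ)
    have := abs_nonneg (G' τ)
    have := (Real.exp_pos (C * X τ)).le
    apply mul_nonneg (mul_nonneg (by linarith only [hA₀nn, hKnn τ (hIsub hτ)])
      (abs_nonneg _)) (Real.exp_pos _).le
  have hJKle : JK ≤ (3/2) * T' := by
    rw [hJKdef, hT'def, ← intervalIntegral.integral_const_mul]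
    apply intervalIntegral.integral_mono_on hsa
    · apply ContinuousOn.intervalIntegrable
      rw [Set.uIcc_of_le hsa]
      exact ((hgcont.mono hIsub).mul (hKcont.mono hIsub)).mul
        (Real.continuous_exp.comp_continuousOn hXgcont)
    · exact hT'int.const_mul _
    · intro τ hτ
      have hτI : τ ∈ I := hIsub hτ
      have hKτ := hKnn τ hτI
      have hXτ := hXnn τ hτ
      have habs := abs_nonneg (G' τ)
      rw [hXg τ, hgdef]
      dsimp only
      have hexp : Real.exp (3/2 * X τ) ≤ Real.exp (C * X τ) :=
        Real.exp_le_exp.2 (by nlinarith only [hXτ, hC32])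
      have h5 : (0:ℝ) ≤ 3/2 * |G' τ| * K τ := by positivity
      have h6 : 3/2 * |G' τ| * K τ ≤ 3/2 * ((A₀ + K τ) * |G' τ|) := by
        have h60 : (0:ℝ) ≤ A₀ * |G' τ| := mul_nonneg hA₀nn habs
        rw [show 3/2 * ((A₀ + K τ) * |G' τ|)
            = 3/2 * |G' τ| * K τ + 3/2 * (A₀ * |G' τ|) from by ring]
        exact le_add_of_nonneg_right (mul_nonneg (by norm_num : (0:ℝ) ≤ 3/2) h60)
      calc 3/2 * |G' τ| * K τ * Real.exp (3/2 * X τ)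
          ≤ 3/2 * |G' τ| * K τ * Real.exp (C * X τ) :=
            mul_le_mul_of_nonneg_left hexp h5
        _ ≤ 3/2 * ((A₀ + K τ) * |G' τ|) * Real.exp (C * X τ) :=
            mul_le_mul_of_nonneg_right h6 (Real.exp_pos _).le
        _ = 3/2 * ((A₀ + K τ) * |G' τ| * Real.exp (C * X τ)) := by ring
  have hexpXa : A₀ * (Real.exp (X a) - 1) ≤ T' := by
    have hprim : (∫ τ in a..s, |G' τ| * Real.exp (∫ r in τ..s, |G' r|))
        = Real.exp (∫ r in a..s, |G' r|) - 1 :=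
      exp_primitive hsa ((hG'c.abs).mono hIsub)
    have h1 : A₀ * (Real.exp (X a) - 1)
        = ∫ τ in a..s, A₀ * (|G' τ| * Real.exp (X τ)) := by
      rw [intervalIntegral.integral_const_mul]
      rw [hXdef]
      dsimp only
      rw [hprim]
    rw [h1, hT'def]
    apply intervalIntegral.integral_mono_on hsa
    · apply IntervalIntegrable.const_mul
      apply ContinuousOn.intervalIntegrable
      rw [Set.uIcc_of_le hsa]
      exact ((hG'c.abs).mono hIsub).mul
        (Real.continuous_exp.comp_continuousOn hXcont)
    · exact hT'int
    · intro τ hτ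
      have hKτ := hKnn τ (hIsub hτ)
      have hXτ := hXnn τ hτ
      have habs := abs_nonneg (G' τ)
      have hexp : Real.exp (X τ) ≤ Real.exp (C * X τ) :=
        Real.exp_le_exp.2 (by nlinarith only [hXτ, hC1])
      calc A₀ * (|G' τ| * Real.exp (X τ))
          ≤ A₀ * (|G' τ| * Real.exp (C * X τ)) := by
            apply mul_le_mul_of_nonneg_left _ hA₀nn
            exact mul_le_mul_of_nonneg_left hexp habs
        _ ≤ (A₀ + K τ) * |G' τ| * Real.exp (C * X τ) := by
            nlinarith only [mul_nonneg hKτ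
              (mul_nonneg habs (Real.exp_pos (C * X τ)).le)]
  -- Step F : conclude
  have hz'F : |z' s| ≤ Real.sqrt (E s) := by
    rw [← Real.sqrt_sq_eq_abs]
    apply Real.sqrt_le_sqrt
    rw [hEdef]
    dsimp only
    linarith only [mul_nonneg (hωnn s hs) (sq_nonneg (z s))]
  have hzF : |z s| ≤ (2/c) * Real.sqrt (E s) := by
    have h1 : c^2 * z s^2 ≤ 4 * E s := by
      have hEs : E s = ω s * z s^2 + z' s^2 := by rw [hEdef]
      nlinarith only [hωlb s hs, sq_nonneg (z s), sq_nonneg (z' s), hEs]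
    have h2 : c * |z s| ≤ 2 * Real.sqrt (E s) := by
      have h3 : c * |z s| = Real.sqrt (c^2 * z s^2) := by
        rw [Real.sqrt_mul (sq_nonneg c), Real.sqrt_sq_eq_abs, Real.sqrt_sq_eq_abs,
          abs_of_pos hc]
      have h4 : (2:ℝ) * Real.sqrt (E s) = Real.sqrt (4 * E s) := by
        rw [Real.sqrt_mul (by norm_num : (0:ℝ) ≤ 4)]
        congr 1
        rw [show (4:ℝ) = 2^2 by norm_num, Real.sqrt_sq (by norm_num : (0:ℝ) ≤ 2)]
      rw [h3, h4]
      exact Real.sqrt_le_sqrt h1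
    rw [div_mul_eq_mul_div, le_div_iff₀ hc]
    linarith only [h2]
  have hFsM : Real.sqrt (E s) ≤ M := hFM s ⟨hsa, le_refl s⟩
  have hLHS : |z s| + |z' s| ≤ c'' * M := by
    have h1 : |z s| + |z' s| ≤ (1 + 2/c) * Real.sqrt (E s) := by
      have := Real.sqrt_nonneg (E s)
      nlinarith only [hzF, hz'F, Real.sqrt_nonneg (E s)]
    have h2 : (1 + 2/c) * Real.sqrt (E s) ≤ (1 + 2/c) * M :=
      mul_le_mul_of_nonneg_left hFsM (by positivity)
    rw [hc''def]
    linarith only [h1, h2]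
  have hfinal : |z s| + |z' s| ≤ C * (A₀ + K s) + C * T' := by
    have h1 : |z s| + |z' s| ≤ c'' * (2*Q + Real.sqrt P) := by
      have := mul_le_mul_of_nonneg_left hMle (by linarith only [hc''1] : (0:ℝ) ≤ c'')
      linarith only [hLHS, this]
    have h2 : c'' * (2*Q + Real.sqrt P)
        ≤ c'' * (2*(K s + JK) + c' * A₀ * Real.exp (X a)) := by
      apply mul_le_mul_of_nonneg_left _ (by linarith only [hc''1] : (0:ℝ) ≤ c'')
      rw [hQdef]
      linarith only [hsqrtP]
    have h3 : c'' * (2*(K s + JK) + c' * A₀ * Real.exp (X a))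
        = 2*c''*(K s) + 2*c''*JK + c''*c'*(A₀*(Real.exp (X a) - 1)) + c''*c'*A₀ := by
      ring
    have h4 : 2*c''*JK ≤ 3*c''*T' := by
      nlinarith only [hJKle, hc''1]
    have h5 : c''*c'*(A₀*(Real.exp (X a) - 1)) ≤ c''*c'*T' := by
      apply mul_le_mul_of_nonneg_left hexpXa
      nlinarith only [hc''1, hc'1]
    have h6 : 2*c''*(K s) ≤ C*(K s) := by
      apply mul_le_mul_of_nonneg_right _ hKsnn
      rw [hCdef]
      nlinarith only [hc''1, hc'1]
    have h7 : c''*c'*A₀ ≤ C*A₀ := by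
      apply mul_le_mul_of_nonneg_right _ hA₀nn
      rw [hCdef]
      nlinarith only [hc''1, hc'1]
    have h8 : 3*c''*T' + c''*c'*T' ≤ C*T' := by
      have : 3*c'' + c''*c' ≤ C := by rw [hCdef]; nlinarith only [hc''1, hc'1]
      nlinarith only [this, hT'nn]
    nlinarith only [h1, h2, h3, h4, h5, h6, h7, h8]
  -- identify with the goal
  have hgoalid : C * (A₀ + K s) + C * T'
      = C * (A₀ + ∫ τ in a..s, |k τ|)
        + C * ∫ τ in a..s, (A₀ + ∫ η in a..τ, |k η|) * |G' τ|
            * Real.exp (C * ∫ r in τ..s, |G' r|) := by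
    rw [hT'def, hKdef, hXdef]
  rw [hgoalid] at hfinal
  exact hfinal
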